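/- Let O be a discrete valuation ring with irreducible element (uniformizer) ϖ, and let R be a commutative O-algebra that is free as an O-module with basis (1, τ). Let A be an O-subalgebra of R that is not contained in the image of O in R. Then there exists a unique natural number m such that A, as an O-submodule of R, equals the O-span of {1, ϖ^m • τ}. (Classification of the O-orders in a quadratic extension: each order is O + ϖ^m τ O for a unique m ∈ ℕ.) -/

import Mathlib

/-- Classification of the `O`-orders in a quadratic extension: every `O`-subalgebra of `R`
not contained in (the image of) `O` is of the form `O + O·ϖ^m τ` for a unique `m : ℕ`. -/
theorem stmt_8 (O R : Type*) [CommRing O] [IsDomain O] [IsDiscreteValuationRing O]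
    [CommRing R] [Algebra O R] (ϖ : O) (hϖ : Irreducible ϖ)
    (τ : R) (b : Module.Basis (Fin 2) O R) (hb0 : b 0 = 1) (hb1 : b 1 = τ)
    (A : Subalgebra O R) (hA : ¬ A ≤ ⊥) :
    ∃! m : ℕ, Subalgebra.toSubmodule A =
      Submodule.span O {(1 : R), ϖ ^ m • τ} := by
  classical
  have hc1_one : b.repr (1 : R) 1 = 0 := by
    rw [← hb0, b.repr_self]; simp
  have hc1_tau : b.repr τ 1 = 1 := by
    rw [← hb1, b.repr_self]; simp
  have hdecomp : ∀ x : R, x = b.repr x 0 • (1 : R) + b.repr x 1 • τ := by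
    intro x
    conv_lhs => rw [← b.sum_repr x]
    rw [Fin.sum_univ_two, hb0, hb1]
  -- key : membership forces divisibility of exponents
  have key : ∀ n m : ℕ, ((ϖ ^ n • τ : R) ∈ Submodule.span O {(1 : R), ϖ ^ m • τ}) → m ≤ n := by
    intro n m hmem
    rw [Submodule.mem_span_pair] at hmem
    obtain ⟨a, d, h⟩ := hmem
    have h1 := congrArg (fun r => b.repr r 1) h
    simp only [map_add, map_smul, Finsupp.coe_add, Finsupp.coe_smul, Pi.add_apply,
      Pi.smul_apply, smul_eq_mul, hc1_one, hc1_tau, mul_zero, mul_one, zero_add] at h1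
    -- h1 : d * (ϖ ^ m * 1) = ϖ ^ n * 1  (roughly)
    have hdvd : ϖ ^ m ∣ ϖ ^ n := ⟨d, by linear_combination -h1⟩
    exact (pow_dvd_pow_iff hϖ.ne_zero hϖ.not_isUnit).mp hdvd
  -- the ideal of second coordinates
  set c1 : R →ₗ[O] O := b.coord 1 with hc1def
  set I : Ideal O := Submodule.map c1 (Subalgebra.toSubmodule A) with hIdef
  have hInz : I ≠ ⊥ := by
    intro h
    apply hA
    intro x hx
    have hx1 : c1 x = 0 := by
      have : c1 x ∈ I := ⟨x, hx, rfl⟩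
      rw [h] at this
      exact Ideal.mem_bot.mp this
    have hx1' : b.repr x 1 = 0 := by simpa [hc1def, Module.Basis.coord_apply] using hx1
    rw [Algebra.mem_bot]
    refine ⟨b.repr x 0, ?_⟩
    rw [Algebra.algebraMap_eq_smul_one]
    conv_rhs => rw [hdecomp x]
    rw [hx1', zero_smul, add_zero]
  obtain ⟨g, hg⟩ := (IsPrincipalIdealRing.principal I)
  have hgnz : g ≠ 0 := by
    intro h
    apply hInz
    rw [hg, h]
    exact Submodule.span_zero_singleton O
  obtain ⟨m, u, hgu⟩ := IsDiscreteValuationRing.eq_unit_mul_pow_irreducible hgnz hϖ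
  have hI : I = Ideal.span {ϖ ^ m} := by
    rw [hg]
    exact Ideal.span_singleton_eq_span_singleton.mpr ⟨u⁻¹, by rw [hgu, mul_comm (u : O), mul_assoc, Units.mul_inv, mul_one]⟩
  have hmain : Subalgebra.toSubmodule A = Submodule.span O {(1 : R), ϖ ^ m • τ} := by
    apply le_antisymm
    · intro x hx
      have hx1 : c1 x ∈ I := ⟨x, hx, rfl⟩
      rw [hI, Ideal.mem_span_singleton] at hx1
      obtain ⟨d, hd⟩ := hx1
      rw [Submodule.mem_span_pair]
      refine ⟨b.repr x 0, d, ?_⟩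
      have : c1 x = b.repr x 1 := by simp [hc1def, Module.Basis.coord_apply]
      rw [this] at hd
      conv_rhs => rw [hdecomp x]
      rw [hd, smul_smul, mul_comm d]
    · rw [Submodule.span_le]
      rintro x (rfl | rfl)
      · exact A.one_mem
      · have : (ϖ ^ m : O) ∈ I := by
          rw [hI]
          exact Ideal.mem_span_singleton_self _
        obtain ⟨y, hyA, hy⟩ := this
        have hy1 : b.repr y 1 = ϖ ^ m := by simpa [hc1def, Module.Basis.coord_apply] using hy
        have hyd := hdecomp y
        rw [hy1] at hyd
        have hEq : (ϖ ^ m • τ : R) = y - b.repr y 0 • (1 : R) := by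
          rw [eq_sub_iff_add_eq, add_comm]
          exact hyd.symm
        rw [hEq]
        exact sub_mem hyA (Submodule.smul_mem _ _ (A.one_mem))
  refine ⟨m, hmain, fun n hn => ?_⟩
  have h1 : (ϖ ^ n • τ : R) ∈ Submodule.span O {(1 : R), ϖ ^ m • τ} := by
    rw [← hmain, hn]
    exact Submodule.subset_span (by simp)
  have h2 : (ϖ ^ m • τ : R) ∈ Submodule.span O {(1 : R), ϖ ^ n • τ} := by
    rw [← hn, hmain]
    exact Submodule.subset_span (by simp)
  exact le_antisymm (key m n h2) (key n m h1)
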